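/- arXiv:1110.3398 — 2 statements merged into one kernel-verified Lean document; each statement's English description precedes it below -/
import Mathlib

section
/- At an infection-free equilibrium (0, x₂*, 0, 0) of the HIV model with constant protease-inhibitor efficacy u₁ ∈ [0,1], if a₂x₂*·a₃a₄(1−u₁)·a₉ < (a₁ + a₂x₂*)(a₉ + a₆)a₄ then the Jacobian of the infected subsystem (x₁,x₃,x₄) restricted to the equilibrium has all leading principal minors of −J positive (Routh–Hurwitz type condition), hence (under the Routh–Hurwitz criterion for 3×3 matrices) all eigenvalues have negative real part. -/
open Matrix

/-- Routh–Hurwitz-type stability of the infection-free equilibrium.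
If a₂x₂*·a₃a₄(1−u₁)·a₉ < (a₁+a₂x₂*)(a₉+a₆)a₄ then all leading principal minors
of −J are positive, and all eigenvalues of J (roots of its char. polynomial over ℂ)
have negative real part. -/
theorem hiv_infection_free_stability
    (a1 a2 a3 a4 a6 a9 : ℝ) (ha1 : 0 < a1) (ha2 : 0 < a2) (ha3 : 0 < a3)
    (ha4 : 0 < a4) (ha6 : 0 < a6) (ha9 : 0 < a9)
    (x2star : ℝ) (hx2 : 0 < x2star) (u1 : ℝ) (hu1 : u1 ∈ Set.Icc (0 : ℝ) 1)
    (J : Matrix (Fin 3) (Fin 3) ℝ)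
    (hJ : J = !![-a1 - a2 * x2star, 0, a3 * a4 * (1 - u1);
                 a2 * x2star, -(a9 + a6), 0;
                 0, a9, -a4])
    (hcond : a2 * x2star * (a3 * a4 * (1 - u1)) * a9 <
      (a1 + a2 * x2star) * (a9 + a6) * a4) :
    (0 < (-J) 0 0 ∧
      0 < Matrix.det ((-J).submatrix (Fin.castLE (by norm_num)) (Fin.castLE (by norm_num)) :
        Matrix (Fin 2) (Fin 2) ℝ) ∧
      0 < Matrix.det (-J)) ∧
    (∀ z : ℂ, (Matrix.charpoly (J.map (algebraMap ℝ ℂ))).IsRoot z → z.re < 0) := by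
  subst hJ
  have hApos : 0 < a1 + a2 * x2star := by positivity
  have hDpos : 0 < a9 + a6 := by positivity
  have hCnn : 0 ≤ a3 * a4 * (1 - u1) := by
    have h1 := hu1.2
    have : 0 ≤ 1 - u1 := by linarith
    positivity
  constructor
  · refine ⟨?_, ?_, ?_⟩
    · simp only [Matrix.neg_apply]
      norm_num [Matrix.cons_val_zero]
      linarith
    · rw [Matrix.det_fin_two]
      simp [Matrix.submatrix_apply, Fin.castLE]
      nlinarith
    · rw [Matrix.det_fin_three]
      simp only [Matrix.neg_apply]
      norm_num [Matrix.cons_val_zero, Matrix.cons_val_one, Matrix.cons_val_two]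
      nlinarith [hcond]
  · intro z hz
    by_contra hre
    push_neg at hre
    have heval : ((!![-a1 - a2 * x2star, 0, a3 * a4 * (1 - u1);
        a2 * x2star, -(a9 + a6), 0; 0, a9, -a4] :
        Matrix (Fin 3) (Fin 3) ℝ).map (algebraMap ℝ ℂ)).charpoly.eval z
        = (z + (a1 + a2 * x2star)) * (z + (a9 + a6)) * (z + a4)
          - (a2 * x2star) * (a3 * a4 * (1 - u1)) * a9 := by
      rw [Matrix.charpoly, Matrix.det_fin_three]
      simp [Matrix.charmatrix_apply_eq, Matrix.charmatrix_apply_ne, Matrix.map_apply]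
      ring
    have hzero : (z + (a1 + a2 * x2star)) * (z + (a9 + a6)) * (z + a4)
        = ((a2 * x2star * (a3 * a4 * (1 - u1)) * a9 : ℝ) : ℂ) := by
      have := hz
      rw [Polynomial.IsRoot, heval] at this
      push_cast
      linear_combination this
    have habs : ‖z + (a1 + a2 * x2star)‖ * ‖z + (a9 + a6)‖
        * ‖z + a4‖ = a2 * x2star * (a3 * a4 * (1 - u1)) * a9 := by
      rw [← norm_mul, ← norm_mul, hzero, Complex.norm_real, Real.norm_eq_abs,
        abs_of_nonneg (by positivity)]
    have hge : ∀ w : ℝ, 0 < w → w ≤ ‖z + w‖ := by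
      intro w hw
      calc w ≤ (z + w).re := by simp; linarith
        _ ≤ ‖z + w‖ := Complex.re_le_norm _
    have h1 := hge _ hApos
    have h2 := hge _ hDpos
    have h3 := hge _ ha4
    push_cast at h1 h2 h3 habs
    have hfin : (a1 + a2 * x2star) * (a9 + a6) * a4 ≤
        ‖z + (a1 + a2 * x2star)‖ * ‖z + (a9 + a6)‖
        * ‖z + a4‖ :=
      mul_le_mul (mul_le_mul h1 h2 hDpos.le (norm_nonneg _)) h3 ha4.le
        (by positivity)
    rw [habs] at hfin
    linarith
end

section
/- The nonnegative orthant ℝ⁴₊ is positively invariant for the HIV model: if the initial state x(0) has all components nonnegative and x is a solution of the ODE system with measurable controls u₁,u₂,u₃,u₄ taking values in [0,1], then all components of x(t) remain nonnegative for all t ≥ 0 in the interval of existence. -/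
set_option maxHeartbeats 1000000
open Filter Asymptotics


open Set



lemma negsq_hasDerivAt {x : ℝ → ℝ} {x' t : ℝ} (h : HasDerivAt x x' t) :
    HasDerivAt (fun s => (min (x s) 0) ^ 2) (2 * min (x t) 0 * x') t := by
  rcases lt_trichotomy (x t) 0 with hlt | heq | hgt
  · have hev : ∀ᶠ s in nhds t, x s < 0 :=
      h.continuousAt.eventually_lt continuousAt_const hlt
    have hev' : (fun s => (min (x s) 0) ^ 2) =ᶠ[nhds t] fun s => (x s) ^ 2 := by
      filter_upwards [hev] with s hs
      rw [min_eq_left hs.le]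
    have hd : HasDerivAt (fun s => (x s) ^ 2) (2 * x t * x') t := by
      have := h.fun_pow 2
      simpa [mul_comm, mul_assoc, mul_left_comm] using this
    rw [min_eq_left hlt.le]
    exact hd.congr_of_eventuallyEq hev'
  · rw [heq]
    simp only [min_self, mul_zero, zero_mul]
    rw [hasDerivAt_iff_isLittleO]
    have hO : (fun s => x s - x t) =O[nhds t] fun s => s - t := h.isBigO_sub
    have hO' : (fun s => min (x s) 0) =O[nhds t] fun s => s - t := by
      refine IsBigO.trans ?_ hO
      apply isBigO_of_le
      intro s
      rw [heq, sub_zero, Real.norm_eq_abs, Real.norm_eq_abs]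
      rcases le_total (x s) 0 with hs | hs
      · rw [min_eq_left hs]
      · rw [min_eq_right hs]; simp
    have hsmall : (fun s : ℝ => s - t) =o[nhds t] fun _ => (1 : ℝ) := by
      rw [isLittleO_one_iff]
      have : Tendsto (fun s : ℝ => s - t) (nhds t) (nhds (t - t)) :=
        (continuous_id.sub continuous_const).tendsto t
      simpa using this
    have key : (fun s => (min (x s) 0) ^ 2) =o[nhds t] fun s => s - t := by
      have h2 := (hO'.mul hO').trans_isLittleO
        (by simpa [mul_comm] using hsmall.mul_isBigO (isBigO_refl (fun s : ℝ => s - t) (nhds t)))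
      simpa [pow_two] using h2
    simpa [heq] using key
  · have hev : ∀ᶠ s in nhds t, 0 < x s :=
      continuousAt_const.eventually_lt h.continuousAt hgt
    have hev' : (fun s => (min (x s) 0) ^ 2) =ᶠ[nhds t] fun _ => (0 : ℝ) := by
      filter_upwards [hev] with s hs
      rw [min_eq_right hs.le]
      norm_num
    rw [min_eq_right hgt.le]
    simpa using (hasDerivAt_const t (0:ℝ)).congr_of_eventuallyEq hev'


lemma term1_bound (a1 a2 a3 a4 M v1 v2 v4 w1 w2 m1 m4 g : ℝ)
    (ha1 : 0 < a1) (ha2 : 0 < a2) (ha3 : 0 < a3) (ha4 : 0 < a4)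
    (hM : 1 ≤ M) (hv2 : |v2| ≤ M)
    (hm1 : m1 = min v1 0) (hm4 : m4 = min v4 0)
    (hw1 : 0 ≤ w1) (hw1' : w1 ≤ 1) (hw2 : 0 ≤ w2) (hw2' : w2 ≤ 1)
    (hg1 : m1 ^ 2 ≤ g) (hg14 : m1 ^ 2 + m4 ^ 2 ≤ g) (hg0 : 0 ≤ g) :
    2 * m1 * (-a1 * v1 - a2 * v1 * v2 * (1 - w2) + a3 * a4 * v4 * (1 - w1))
      ≤ (2 * a2 * M + 2 * a3 * a4) * g := by
  obtain ⟨hv2l, hv2r⟩ := abs_le.mp hv2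
  have hM0 : (0:ℝ) < M := lt_of_lt_of_le one_pos hM
  have hm4n : m4 ≤ 0 := by rw [hm4]; exact min_le_right _ _
  have s13 : m4 ≤ v4 * (1 - w1) := by
    rcases le_total v4 0 with h | h
    · rw [hm4, min_eq_left h]; nlinarith [mul_nonneg (neg_nonneg.mpr h) hw1]
    · rw [hm4, min_eq_right h]; exact mul_nonneg h (by linarith)
  rcases le_total v1 0 with h | h
  · have e1 : m1 = v1 := by rw [hm1, min_eq_left h]
    subst e1
    have k3 : m1 * (v4 * (1 - w1)) ≤ m1 * m4 := mul_le_mul_of_nonpos_left s13 h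
    have k4 : m1 * m4 ≤ (m1 ^ 2 + m4 ^ 2) / 2 := by nlinarith [sq_nonneg (m1 - m4)]
    have s12 : -(v2 * (1 - w2)) ≤ M := by
      nlinarith [mul_nonneg (by linarith : (0:ℝ) ≤ M + v2) (by linarith : (0:ℝ) ≤ 1 - w2),
        mul_nonneg hM0.le hw2]
    have k1 : a2 * (m1 ^ 2 * (-(v2 * (1 - w2)))) ≤ a2 * (m1 ^ 2 * M) :=
      mul_le_mul_of_nonneg_left (mul_le_mul_of_nonneg_left s12 (sq_nonneg m1)) ha2.le
    have k5 : a2 * M * m1 ^ 2 ≤ a2 * M * g :=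
      mul_le_mul_of_nonneg_left hg1 (by positivity)
    have k34 : a3 * a4 * (m1 * (v4 * (1 - w1))) ≤ a3 * a4 * ((m1 ^ 2 + m4 ^ 2) / 2) :=
      mul_le_mul_of_nonneg_left (le_trans k3 k4) (by positivity)
    have k6 : a3 * a4 * (m1 ^ 2 + m4 ^ 2) ≤ a3 * a4 * g :=
      mul_le_mul_of_nonneg_left hg14 (by positivity)
    have k7 : 0 ≤ a1 * m1 ^ 2 := by positivity
    have k8 : 0 ≤ a3 * a4 * g := by positivity
    nlinarith [k1, k5, k34, k6, k7, k8]
  · have e1 : m1 = 0 := by rw [hm1, min_eq_right h]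
    rw [e1]
    have : (0:ℝ) ≤ (2 * a2 * M + 2 * a3 * a4) * g := by positivity
    linarith

lemma term2_bound (a2 a5 a6 a7 a8 M D v1 v2 v3 v4 w2 w3 w4 m2 g : ℝ)
    (ha2 : 0 < a2) (ha5 : 0 < a5) (ha6 : 0 < a6) (ha7 : 0 < a7) (ha8 : 0 < a8)
    (hM : 1 ≤ M) (hD : D = 1 + 3 * M / a8)
    (hv1 : |v1| ≤ M) (hv2 : |v2| ≤ M) (hv3 : |v3| ≤ M) (hv4 : |v4| ≤ M)
    (hm2 : m2 = min v2 0)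
    (hw2 : 0 ≤ w2) (hw2' : w2 ≤ 1) (hw3 : 0 ≤ w3) (hw3' : w3 ≤ 1)
    (hw4 : 0 ≤ w4) (hw4' : w4 ≤ 1)
    (hsmall : -(1/2 : ℝ) ≤ v1)
    (hg2 : m2 ^ 2 ≤ g) (hg0 : 0 ≤ g) :
    2 * m2 * (a5 / (1 + v1) - a2 * v1 * v2 * (1 - w2) * (1 - w4) - a6 * v2
        + a7 * (1 - (v2 + v3 + v4) / a8) * v2 * (1 + w3))
      ≤ (2 * a2 * M + 4 * a7 * D) * g := by
  obtain ⟨hv1l, hv1r⟩ := abs_le.mp hv1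
  obtain ⟨hv2l, hv2r⟩ := abs_le.mp hv2
  obtain ⟨hv3l, hv3r⟩ := abs_le.mp hv3
  obtain ⟨hv4l, hv4r⟩ := abs_le.mp hv4
  have hM0 : (0:ℝ) < M := lt_of_lt_of_le one_pos hM
  have haux : (0:ℝ) ≤ 3 * M / a8 := by positivity
  have hD1 : (1:ℝ) ≤ D := by rw [hD]; linarith
  rcases le_total v2 0 with h | h
  · have e2 : m2 = v2 := by rw [hm2, min_eq_left h]
    rw [e2] at hg2 ⊢
    have hpos : (0:ℝ) < 1 + v1 := by linarith
    -- piece 1 : the division term is nonpositive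
    have p1 : 2 * v2 * (a5 / (1 + v1)) ≤ 0 :=
      mul_nonpos_of_nonpos_of_nonneg (by linarith) (div_nonneg ha5.le hpos.le)
    -- piece 2 : the infection term
    have hc0 : (0:ℝ) ≤ (1 - w2) * (1 - w4) := mul_nonneg (by linarith) (by linarith)
    have hc1 : (1 - w2) * (1 - w4) ≤ 1 := by nlinarith
    have p2 : -(v1 * ((1 - w2) * (1 - w4))) ≤ M := by
      nlinarith [mul_nonneg (by linarith : (0:ℝ) ≤ M + v1) hc0,
        mul_nonneg hM0.le (by linarith : (0:ℝ) ≤ 1 - (1 - w2) * (1 - w4))]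
    have k2 : a2 * (v2 ^ 2 * (-(v1 * ((1 - w2) * (1 - w4))))) ≤ a2 * (v2 ^ 2 * M) :=
      mul_le_mul_of_nonneg_left (mul_le_mul_of_nonneg_left p2 (sq_nonneg v2)) ha2.le
    -- piece 3 : the logistic term
    have hq : 1 - (v2 + v3 + v4) / a8 ≤ D := by
      have h1 : (-(3 * M)) / a8 ≤ (v2 + v3 + v4) / a8 :=
        div_le_div_of_nonneg_right (by linarith) ha8.le
      rw [neg_div] at h1
      rw [hD]
      linarith
    have hwe : (1 - (v2 + v3 + v4) / a8) * (1 + w3) ≤ 2 * D := by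
      nlinarith [mul_nonneg (by linarith : (0:ℝ) ≤ D - (1 - (v2 + v3 + v4) / a8))
          (by linarith : (0:ℝ) ≤ 1 + w3),
        mul_nonneg (by linarith : (0:ℝ) ≤ D) (by linarith : (0:ℝ) ≤ 2 - (1 + w3))]
    have p4 : a7 * (v2 ^ 2 * ((1 - (v2 + v3 + v4) / a8) * (1 + w3)))
        ≤ a7 * (v2 ^ 2 * (2 * D)) :=
      mul_le_mul_of_nonneg_left (mul_le_mul_of_nonneg_left hwe (sq_nonneg v2)) ha7.le
    -- combine with v2² ≤ g
    have k5 : a2 * M * v2 ^ 2 ≤ a2 * M * g := mul_le_mul_of_nonneg_left hg2 (by positivity)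
    have hDpos : (0:ℝ) < D := lt_of_lt_of_le one_pos hD1
    have k6 : a7 * (2 * D) * v2 ^ 2 ≤ a7 * (2 * D) * g :=
      mul_le_mul_of_nonneg_left hg2 (by positivity)
    have k7 : 0 ≤ a6 * v2 ^ 2 := by positivity
    nlinarith [p1, k2, p4, k5, k6, k7]
  · have e2 : m2 = 0 := by rw [hm2, min_eq_right h]
    rw [e2]
    have hDpos : (0:ℝ) < D := lt_of_lt_of_le one_pos hD1
    have : (0:ℝ) ≤ (2 * a2 * M + 4 * a7 * D) * g := by positivity
    linarith

lemma term3_bound (a2 a6 a9 M v1 v2 v3 w2 w4 m1 m2 m3 g : ℝ)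
    (ha2 : 0 < a2) (ha6 : 0 < a6) (ha9 : 0 < a9)
    (hM : 1 ≤ M) (hv1 : |v1| ≤ M) (hv2 : |v2| ≤ M)
    (hm1 : m1 = min v1 0) (hm2 : m2 = min v2 0) (hm3 : m3 = min v3 0)
    (hw2 : 0 ≤ w2) (hw2' : w2 ≤ 1) (hw4 : 0 ≤ w4) (hw4' : w4 ≤ 1)
    (hg13 : m1 ^ 2 + m3 ^ 2 ≤ g) (hg23 : m2 ^ 2 + m3 ^ 2 ≤ g) (hg0 : 0 ≤ g) :
    2 * m3 * (a2 * v1 * v2 * (1 - w2) * (1 - w4) - a9 * v3 - a6 * v3)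
      ≤ (2 * a2 * M) * g := by
  obtain ⟨hv1l, hv1r⟩ := abs_le.mp hv1
  obtain ⟨hv2l, hv2r⟩ := abs_le.mp hv2
  have hM0 : (0:ℝ) < M := lt_of_lt_of_le one_pos hM
  have hc0 : (0:ℝ) ≤ (1 - w2) * (1 - w4) := mul_nonneg (by linarith) (by linarith)
  have hc1 : (1 - w2) * (1 - w4) ≤ 1 := by nlinarith
  rcases le_total v3 0 with h3 | h3
  · have e3 : m3 = v3 := by rw [hm3, min_eq_left h3]
    rw [e3] at hg13 hg23 ⊢
    -- claim : M * (m1 + m2) ≤ v1 * v2 * ((1-w2)*(1-w4))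
    have hA : M * (m1 + m2) ≤ v1 * v2 * ((1 - w2) * (1 - w4)) := by
      rcases le_total v1 0 with h1 | h1 <;> rcases le_total v2 0 with h2 | h2
      · rw [hm1, min_eq_left h1, hm2, min_eq_left h2]
        nlinarith [mul_nonneg (mul_nonneg (neg_nonneg.mpr h1) (neg_nonneg.mpr h2)) hc0]
      · rw [hm1, min_eq_left h1, hm2, min_eq_right h2]
        have hb : v2 * ((1 - w2) * (1 - w4)) ≤ M := by nlinarith
        nlinarith [mul_le_mul_of_nonpos_left hb h1]
      · rw [hm1, min_eq_right h1, hm2, min_eq_left h2]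
        have hb : v1 * ((1 - w2) * (1 - w4)) ≤ M := by nlinarith
        nlinarith [mul_le_mul_of_nonpos_left hb h2]
      · rw [hm1, min_eq_right h1, hm2, min_eq_right h2]
        have : (0:ℝ) ≤ v1 * v2 * ((1 - w2) * (1 - w4)) :=
          mul_nonneg (mul_nonneg h1 h2) hc0
        linarith
    have hB : v3 * (v1 * v2 * ((1 - w2) * (1 - w4))) ≤ v3 * (M * (m1 + m2)) :=
      mul_le_mul_of_nonpos_left hA h3
    have hC : v3 * (M * (m1 + m2)) ≤ M * ((m1 ^ 2 + v3 ^ 2) / 2 + (m2 ^ 2 + v3 ^ 2) / 2) := by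
      nlinarith [sq_nonneg (v3 - m1), sq_nonneg (v3 - m2)]
    have k1 : a2 * (v3 * (v1 * v2 * ((1 - w2) * (1 - w4))))
        ≤ a2 * (M * ((m1 ^ 2 + v3 ^ 2) / 2 + (m2 ^ 2 + v3 ^ 2) / 2)) :=
      mul_le_mul_of_nonneg_left (le_trans hB hC) ha2.le
    have k2 : a2 * M * ((m1 ^ 2 + v3 ^ 2) + (m2 ^ 2 + v3 ^ 2)) ≤ a2 * M * (g + g) :=
      mul_le_mul_of_nonneg_left (by linarith) (by positivity)
    have k3 : 0 ≤ (a9 + a6) * v3 ^ 2 := by positivity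
    nlinarith [k1, k2, k3]
  · have e3 : m3 = 0 := by rw [hm3, min_eq_right h3]
    rw [e3]
    have : (0:ℝ) ≤ 2 * a2 * M * g := by positivity
    linarith

lemma term4_bound (a4 a9 M v3 v4 m3 m4 g : ℝ)
    (ha4 : 0 < a4) (ha9 : 0 < a9) (hM : 1 ≤ M)
    (hm3 : m3 = min v3 0) (hm4 : m4 = min v4 0)
    (hg34 : m3 ^ 2 + m4 ^ 2 ≤ g) (hg0 : 0 ≤ g) :
    2 * m4 * (a9 * v3 - a4 * v4) ≤ (2 * a9) * g := by
  rcases le_total v4 0 with h4 | h4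
  · have e4 : m4 = v4 := by rw [hm4, min_eq_left h4]
    rw [e4] at hg34 ⊢
    have hm3v : m3 ≤ v3 := by rw [hm3]; exact min_le_left _ _
    have hB : v4 * v3 ≤ v4 * m3 := mul_le_mul_of_nonpos_left hm3v h4
    have hC : v4 * m3 ≤ (m3 ^ 2 + v4 ^ 2) / 2 := by nlinarith [sq_nonneg (v4 - m3)]
    have k1 : a9 * (v4 * v3) ≤ a9 * ((m3 ^ 2 + v4 ^ 2) / 2) :=
      mul_le_mul_of_nonneg_left (le_trans hB hC) ha9.le
    have k2 : a9 * (m3 ^ 2 + v4 ^ 2) ≤ a9 * g := mul_le_mul_of_nonneg_left hg34 ha9.le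
    have k3 : 0 ≤ a4 * v4 ^ 2 := by positivity
    have k4 : 0 ≤ a9 * g := by positivity
    nlinarith [k1, k2, k3, k4]
  · have e4 : m4 = 0 := by rw [hm4, min_eq_right h4]
    rw [e4]
    have : (0:ℝ) ≤ 2 * a9 * g := by positivity
    linarith
/-- Positive invariance of the nonnegative orthant for the HIV model:
nonnegative initial data and measurable controls with values in [0,1] give
nonnegative states on the interval of existence [0,T]. -/
theorem hiv_nonneg_orthant_invariant
    (a1 a2 a3 a4 a5 a6 a7 a8 a9 : ℝ)
    (ha1 : 0 < a1) (ha2 : 0 < a2) (ha3 : 0 < a3) (ha4 : 0 < a4) (ha5 : 0 < a5)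
    (ha6 : 0 < a6) (ha7 : 0 < a7) (ha8 : 0 < a8) (ha9 : 0 < a9)
    (T : ℝ) (hT : 0 ≤ T)
    (x1 x2 x3 x4 u1 u2 u3 u4 : ℝ → ℝ)
    (hu1m : Measurable u1) (hu2m : Measurable u2) (hu3m : Measurable u3)
    (hu4m : Measurable u4)
    (hu1 : ∀ t, u1 t ∈ Icc (0 : ℝ) 1) (hu2 : ∀ t, u2 t ∈ Icc (0 : ℝ) 1)
    (hu3 : ∀ t, u3 t ∈ Icc (0 : ℝ) 1) (hu4 : ∀ t, u4 t ∈ Icc (0 : ℝ) 1)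
    (hx1 : ∀ t ∈ Icc 0 T, HasDerivAt x1
      (-a1 * x1 t - a2 * x1 t * x2 t * (1 - u2 t) + a3 * a4 * x4 t * (1 - u1 t)) t)
    (hx2 : ∀ t ∈ Icc 0 T, HasDerivAt x2
      (a5 / (1 + x1 t) - a2 * x1 t * x2 t * (1 - u2 t) * (1 - u4 t) - a6 * x2 t
        + a7 * (1 - (x2 t + x3 t + x4 t) / a8) * x2 t * (1 + u3 t)) t)
    (hx3 : ∀ t ∈ Icc 0 T, HasDerivAt x3
      (a2 * x1 t * x2 t * (1 - u2 t) * (1 - u4 t) - a9 * x3 t - a6 * x3 t) t)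
    (hx4 : ∀ t ∈ Icc 0 T, HasDerivAt x4 (a9 * x3 t - a4 * x4 t) t)
    (h10 : 0 ≤ x1 0) (h20 : 0 ≤ x2 0) (h30 : 0 ≤ x3 0) (h40 : 0 ≤ x4 0) :
    ∀ t ∈ Icc 0 T, 0 ≤ x1 t ∧ 0 ≤ x2 t ∧ 0 ≤ x3 t ∧ 0 ≤ x4 t := by
  -- continuity of the states on [0, T]
  have hc1 : ContinuousOn x1 (Icc 0 T) := fun t ht => (hx1 t ht).continuousAt.continuousWithinAt
  have hc2 : ContinuousOn x2 (Icc 0 T) := fun t ht => (hx2 t ht).continuousAt.continuousWithinAt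
  have hc3 : ContinuousOn x3 (Icc 0 T) := fun t ht => (hx3 t ht).continuousAt.continuousWithinAt
  have hc4 : ContinuousOn x4 (Icc 0 T) := fun t ht => (hx4 t ht).continuousAt.continuousWithinAt
  -- a uniform bound M ≥ 1 on all coordinates
  obtain ⟨M1, hM1⟩ := isCompact_Icc.exists_bound_of_continuousOn hc1
  obtain ⟨M2, hM2⟩ := isCompact_Icc.exists_bound_of_continuousOn hc2
  obtain ⟨M3, hM3⟩ := isCompact_Icc.exists_bound_of_continuousOn hc3
  obtain ⟨M4, hM4⟩ := isCompact_Icc.exists_bound_of_continuousOn hc4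
  set M : ℝ := max 1 (max (max M1 M2) (max M3 M4)) with hMdef
  have hM : (1:ℝ) ≤ M := le_max_left _ _
  have hb1 : ∀ t ∈ Icc 0 T, |x1 t| ≤ M := fun t ht => le_trans (by
      simpa using hM1 t ht) (le_trans (le_max_left M1 M2)
      (le_trans (le_max_left _ _) (le_max_right _ _)))
  have hb2 : ∀ t ∈ Icc 0 T, |x2 t| ≤ M := fun t ht => le_trans (by
      simpa using hM2 t ht) (le_trans (le_max_right M1 M2)
      (le_trans (le_max_left _ _) (le_max_right _ _)))
  have hb3 : ∀ t ∈ Icc 0 T, |x3 t| ≤ M := fun t ht => le_trans (by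
      simpa using hM3 t ht) (le_trans (le_max_left M3 M4)
      (le_trans (le_max_right _ _) (le_max_right _ _)))
  have hb4 : ∀ t ∈ Icc 0 T, |x4 t| ≤ M := fun t ht => le_trans (by
      simpa using hM4 t ht) (le_trans (le_max_right M3 M4)
      (le_trans (le_max_right _ _) (le_max_right _ _)))
  -- the Lyapunov-type function: sum of squared negative parts
  set g : ℝ → ℝ := fun t =>
    (min (x1 t) 0) ^ 2 + (min (x2 t) 0) ^ 2 + (min (x3 t) 0) ^ 2 + (min (x4 t) 0) ^ 2
    with hgdef
  have hgnonneg : ∀ t, 0 ≤ g t := by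
    intro t; simp only [hgdef]; positivity
  have hgsq1 : ∀ s, (min (x1 s) 0) ^ 2 ≤ g s := by
    intro s; simp only [hgdef]
    nlinarith [sq_nonneg (min (x2 s) 0), sq_nonneg (min (x3 s) 0), sq_nonneg (min (x4 s) 0)]
  have hgsq14 : ∀ s, (min (x1 s) 0) ^ 2 + (min (x4 s) 0) ^ 2 ≤ g s := by
    intro s; simp only [hgdef]
    nlinarith [sq_nonneg (min (x2 s) 0), sq_nonneg (min (x3 s) 0)]
  have hgsq2 : ∀ s, (min (x2 s) 0) ^ 2 ≤ g s := by
    intro s; simp only [hgdef]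
    nlinarith [sq_nonneg (min (x1 s) 0), sq_nonneg (min (x3 s) 0), sq_nonneg (min (x4 s) 0)]
  have hgsq13 : ∀ s, (min (x1 s) 0) ^ 2 + (min (x3 s) 0) ^ 2 ≤ g s := by
    intro s; simp only [hgdef]
    nlinarith [sq_nonneg (min (x2 s) 0), sq_nonneg (min (x4 s) 0)]
  have hgsq23 : ∀ s, (min (x2 s) 0) ^ 2 + (min (x3 s) 0) ^ 2 ≤ g s := by
    intro s; simp only [hgdef]
    nlinarith [sq_nonneg (min (x1 s) 0), sq_nonneg (min (x4 s) 0)]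
  have hgsq34 : ∀ s, (min (x3 s) 0) ^ 2 + (min (x4 s) 0) ^ 2 ≤ g s := by
    intro s; simp only [hgdef]
    nlinarith [sq_nonneg (min (x1 s) 0), sq_nonneg (min (x2 s) 0)]
  -- the derivative of g along the flow
  set G : ℝ → ℝ := fun t =>
    2 * min (x1 t) 0 *
      (-a1 * x1 t - a2 * x1 t * x2 t * (1 - u2 t) + a3 * a4 * x4 t * (1 - u1 t))
    + 2 * min (x2 t) 0 *
      (a5 / (1 + x1 t) - a2 * x1 t * x2 t * (1 - u2 t) * (1 - u4 t) - a6 * x2 t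
        + a7 * (1 - (x2 t + x3 t + x4 t) / a8) * x2 t * (1 + u3 t))
    + 2 * min (x3 t) 0 *
      (a2 * x1 t * x2 t * (1 - u2 t) * (1 - u4 t) - a9 * x3 t - a6 * x3 t)
    + 2 * min (x4 t) 0 * (a9 * x3 t - a4 * x4 t) with hGdef
  have hg : ∀ t ∈ Icc 0 T, HasDerivAt g (G t) t := by
    intro t ht
    simp only [hgdef, hGdef]
    exact (((negsq_hasDerivAt (hx1 t ht)).add (negsq_hasDerivAt (hx2 t ht))).add
      (negsq_hasDerivAt (hx3 t ht))).add (negsq_hasDerivAt (hx4 t ht))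
  set D : ℝ := 1 + 3 * M / a8 with hDdef
  have hDaux : (0:ℝ) ≤ 3 * M / a8 := by positivity
  have hD1 : (1:ℝ) ≤ D := by rw [hDdef]; linarith
  set K : ℝ := (2 * a2 * M + 2 * a3 * a4) + (2 * a2 * M + 4 * a7 * D) + 2 * a2 * M + 2 * a9
    with hKdef
  -- the key differential inequality, valid where min (x1 t) 0 ≥ -1/2
  have key : ∀ t ∈ Icc 0 T, -(1/2 : ℝ) ≤ min (x1 t) 0 → G t ≤ K * g t := by
    intro t ht hsm
    obtain ⟨hu1l, hu1r⟩ := hu1 t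
    obtain ⟨hu2l, hu2r⟩ := hu2 t
    obtain ⟨hu3l, hu3r⟩ := hu3 t
    obtain ⟨hu4l, hu4r⟩ := hu4 t
    have hsmv : -(1/2 : ℝ) ≤ x1 t := le_trans hsm (min_le_left _ _)
    have T1 := term1_bound a1 a2 a3 a4 M (x1 t) (x2 t) (x4 t) (u1 t) (u2 t)
      (min (x1 t) 0) (min (x4 t) 0) (g t) ha1 ha2 ha3 ha4 hM (hb2 t ht) rfl rfl
      hu1l hu1r hu2l hu2r (hgsq1 t) (hgsq14 t) (hgnonneg t)
    have T2 := term2_bound a2 a5 a6 a7 a8 M D (x1 t) (x2 t) (x3 t) (x4 t)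
      (u2 t) (u3 t) (u4 t) (min (x2 t) 0) (g t) ha2 ha5 ha6 ha7 ha8 hM hDdef
      (hb1 t ht) (hb2 t ht) (hb3 t ht) (hb4 t ht) rfl
      hu2l hu2r hu3l hu3r hu4l hu4r hsmv (hgsq2 t) (hgnonneg t)
    have T3 := term3_bound a2 a6 a9 M (x1 t) (x2 t) (x3 t) (u2 t) (u4 t)
      (min (x1 t) 0) (min (x2 t) 0) (min (x3 t) 0) (g t) ha2 ha6 ha9 hM
      (hb1 t ht) (hb2 t ht) rfl rfl rfl hu2l hu2r hu4l hu4r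
      (hgsq13 t) (hgsq23 t) (hgnonneg t)
    have T4 := term4_bound a4 a9 M (x3 t) (x4 t) (min (x3 t) 0) (min (x4 t) 0) (g t)
      ha4 ha9 hM rfl rfl (hgsq34 t) (hgnonneg t)
    simp only [hGdef, hKdef]
    exact le_trans (add_le_add (add_le_add (add_le_add T1 T2) T3) T4) (le_of_eq (by ring))
  -- propagation of the zero set of g
  have prop : ∀ τ, τ ∈ Icc 0 T → g τ = 0 → τ < T →
      ∃ b, τ < b ∧ b ≤ T ∧ ∀ s ∈ Icc τ b, g s = 0 := by
    intro τ hτ hgτ hτT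
    have hgc : ContinuousAt g τ := (hg τ hτ).continuousAt
    have hev : ∀ᶠ s in nhds τ, g s < 1/16 :=
      hgc.eventually_lt continuousAt_const (by rw [hgτ]; norm_num)
    rw [Metric.eventually_nhds_iff] at hev
    obtain ⟨ε, hε, hball⟩ := hev
    refine ⟨min T (τ + ε/2), lt_min hτT (by linarith), min_le_left _ _, ?_⟩
    have hbT : min T (τ + ε/2) ≤ T := min_le_left _ _
    have hsmall' : ∀ s ∈ Icc τ (min T (τ + ε/2)), g s < 1/16 := by
      intro s hs
      apply hball
      have h2 : s ≤ τ + ε/2 := le_trans hs.2 (min_le_right _ _)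
      rw [Real.dist_eq, abs_of_nonneg (by linarith [hs.1])]
      linarith
    have hsub : Icc τ (min T (τ + ε/2)) ⊆ Icc 0 T :=
      fun s hs => ⟨le_trans hτ.1 hs.1, le_trans hs.2 hbT⟩
    have hm1small : ∀ s ∈ Icc τ (min T (τ + ε/2)), -(1/2 : ℝ) ≤ min (x1 s) 0 := by
      intro s hs
      have h1 := hgsq1 s
      have h2 := hsmall' s hs
      nlinarith [sq_nonneg (min (x1 s) 0 + 1/2), min_le_right (x1 s) 0]
    have gron := le_gronwallBound_of_liminf_deriv_right_le
      (f := g) (f' := G) (δ := 0) (K := K) (ε := 0) (a := τ) (b := min T (τ + ε/2))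
      (fun s hs => ((hg s (hsub hs)).continuousAt.continuousWithinAt))
      (fun s hs r hr =>
        ((hg s (hsub (Ico_subset_Icc_self hs))).hasDerivWithinAt.liminf_right_slope_le hr))
      (le_of_eq hgτ)
      (fun s hs => by
        have h := key s (hsub (Ico_subset_Icc_self hs))
          (hm1small s (Ico_subset_Icc_self hs))
        linarith)
    intro s hs
    have h1 := gron s hs
    rw [gronwallBound_ε0_δ0] at h1
    exact le_antisymm h1 (hgnonneg s)
  -- the supremum argument
  have hg00 : g 0 = 0 := by
    simp only [hgdef]
    rw [min_eq_right h10, min_eq_right h20, min_eq_right h30, min_eq_right h40]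
    norm_num
  set S : Set ℝ := {t | t ∈ Icc 0 T ∧ ∀ s ∈ Icc 0 t, g s = 0} with hSdef
  have hS0 : (0:ℝ) ∈ S := ⟨left_mem_Icc.mpr hT, fun s hs => by
    have : s = 0 := le_antisymm hs.2 hs.1
    rw [this, hg00]⟩
  have hSbdd : BddAbove S := ⟨T, fun t htS => htS.1.2⟩
  have hSne : S.Nonempty := ⟨0, hS0⟩
  have hτ0 : 0 ≤ sSup S := le_csSup hSbdd hS0
  have hτT : sSup S ≤ T := csSup_le hSne (fun t ht => ht.1.2)
  have hzero_lt : ∀ s, 0 ≤ s → s < sSup S → g s = 0 := by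
    intro s hs0 hlt
    obtain ⟨a, haS, hsa⟩ := exists_lt_of_lt_csSup hSne hlt
    exact haS.2 s ⟨hs0, hsa.le⟩
  have hτzero : ∀ s ∈ Icc 0 (sSup S), g s = 0 := by
    intro s hs
    rcases lt_or_eq_of_le hs.2 with hlt | heq
    · exact hzero_lt s hs.1 hlt
    · subst heq
      rcases eq_or_lt_of_le hτ0 with h0 | h0
      · rw [← h0]; exact hg00
      · have hgc : ContinuousAt g (sSup S) := (hg _ ⟨hτ0, hτT⟩).continuousAt
        have ht1 : Filter.Tendsto g (nhdsWithin (sSup S) (Ico 0 (sSup S))) (nhds (g (sSup S))) :=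
          hgc.tendsto.mono_left nhdsWithin_le_nhds
        have hne : (nhdsWithin (sSup S) (Ico 0 (sSup S))).NeBot := by
          have hcl : sSup S ∈ closure (Ico 0 (sSup S)) := by
            rw [closure_Ico (ne_of_lt h0)]
            exact ⟨hτ0, le_refl _⟩
          exact mem_closure_iff_nhdsWithin_neBot.mp hcl
        have ht2 : Filter.Tendsto g (nhdsWithin (sSup S) (Ico 0 (sSup S))) (nhds 0) := by
          apply Filter.Tendsto.congr' _ tendsto_const_nhds
          filter_upwards [self_mem_nhdsWithin] with s hs
          exact (hzero_lt s hs.1 hs.2).symm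
        exact tendsto_nhds_unique ht1 ht2
  have hτeq : sSup S = T := by
    by_contra hne
    have hlt : sSup S < T := lt_of_le_of_ne hτT hne
    obtain ⟨b, hb1, hb2, hb3⟩ := prop (sSup S) ⟨hτ0, hτT⟩
      (hτzero (sSup S) ⟨hτ0, le_refl _⟩) hlt
    have hbS : b ∈ S := ⟨⟨by linarith, hb2⟩, fun s hs => by
      rcases le_total s (sSup S) with h | h
      · exact hτzero s ⟨hs.1, h⟩
      · exact hb3 s ⟨h, hs.2⟩⟩
    have := le_csSup hSbdd hbS
    linarith
  -- conclusion
  intro t ht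
  have hgt : g t = 0 := hτzero t ⟨ht.1, hτeq ▸ ht.2⟩
  simp only [hgdef] at hgt
  have q1 : (min (x1 t) 0) ^ 2 = 0 := by
    nlinarith [sq_nonneg (min (x1 t) 0), sq_nonneg (min (x2 t) 0),
      sq_nonneg (min (x3 t) 0), sq_nonneg (min (x4 t) 0)]
  have q2 : (min (x2 t) 0) ^ 2 = 0 := by
    nlinarith [sq_nonneg (min (x1 t) 0), sq_nonneg (min (x2 t) 0),
      sq_nonneg (min (x3 t) 0), sq_nonneg (min (x4 t) 0)]
  have q3 : (min (x3 t) 0) ^ 2 = 0 := by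
    nlinarith [sq_nonneg (min (x1 t) 0), sq_nonneg (min (x2 t) 0),
      sq_nonneg (min (x3 t) 0), sq_nonneg (min (x4 t) 0)]
  have q4 : (min (x4 t) 0) ^ 2 = 0 := by
    nlinarith [sq_nonneg (min (x1 t) 0), sq_nonneg (min (x2 t) 0),
      sq_nonneg (min (x3 t) 0), sq_nonneg (min (x4 t) 0)]
  refine ⟨?_, ?_, ?_, ?_⟩
  · exact min_eq_right_iff.mp (pow_eq_zero_iff two_ne_zero |>.mp q1)
  · exact min_eq_right_iff.mp (pow_eq_zero_iff two_ne_zero |>.mp q2)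
  · exact min_eq_right_iff.mp (pow_eq_zero_iff two_ne_zero |>.mp q3)
  · exact min_eq_right_iff.mp (pow_eq_zero_iff two_ne_zero |>.mp q4)
end
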